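/- arXiv:2410.01452 — 3 statements merged into one kernel-verified Lean document; each statement's English description precedes it below -/
import Mathlib

section
/- Let ρ_i be representations of a group G on vector spaces X_i, i = 0,…,N, let σ_i: X_{i+1} → X_{i+1} be G-equivariant maps, and for a tuple A = (A_0,…,A_{N-1}) of linear maps A_i: X_i → X_{i+1} define the network Φ_A(x) by x_0 = x, x_{i+1} = σ_i(A_i x_i), Φ_A(x) = x_N. Let ρ act on tuples by (ρ(g)A)_i = ρ_{i+1}(g) ∘ A_i ∘ ρ_i(g)^{-1}. Then Φ_A(ρ_0(g)x) = ρ_N(g) Φ_{ρ(g^{-1})A}(x) for all g ∈ G and x ∈ X_0. -/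
/-- The layered network: `x_0 = x`, `x_{i+1} = σ_i (A_i x_i)`, `Φ_A(x) = x_N`. -/
def Phi {X : ℕ → Type*} [∀ i, AddCommGroup (X i)] [∀ i, Module ℝ (X i)]
    (σ : ∀ i : ℕ, X (i + 1) → X (i + 1)) (A : ∀ i : ℕ, X i →ₗ[ℝ] X (i + 1)) :
    (n : ℕ) → X 0 → X n
  | 0, x => x
  | n + 1, x => σ n (A n (Phi σ A n x))

/-- With `G`-equivariant nonlinearities `σ_i` and the lifted action
`(ρ(g)A)_i = ρ_{i+1}(g) ∘ A_i ∘ ρ_i(g)⁻¹` on parameters, one has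
`Φ_A(ρ_0(g)x) = ρ_N(g) Φ_{ρ(g⁻¹)A}(x)`. -/
theorem stmt8 {G : Type*} [Group G] {X : ℕ → Type*}
    [∀ i, AddCommGroup (X i)] [∀ i, Module ℝ (X i)]
    (ρ : ∀ i : ℕ, G →* (X i ≃ₗ[ℝ] X i))
    (σ : ∀ i : ℕ, X (i + 1) → X (i + 1))
    (hσ : ∀ (i : ℕ) (g : G) (y : X (i + 1)), σ i (ρ (i + 1) g y) = ρ (i + 1) g (σ i y))
    (A : ∀ i : ℕ, X i →ₗ[ℝ] X (i + 1)) (N : ℕ) (g : G) (x : X 0) :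
    Phi σ A N (ρ 0 g x)
      = ρ N g (Phi σ
          (fun i => (ρ (i + 1) g⁻¹).toLinearMap ∘ₗ A i ∘ₗ (ρ i g⁻¹).symm.toLinearMap)
          N x) := by
  induction N with
  | zero => simp [Phi]
  | succ n ih =>
    have key : ∀ (i : ℕ) (a b : G) (y : X i), ρ i a (ρ i b y) = ρ i (a * b) y := by
      intro i a b y
      rw [map_mul]
      rfl
    have hsymm : ∀ (i : ℕ) (y : X i), (ρ i g⁻¹).symm y = ρ i g y := by
      intro i y
      rw [LinearEquiv.symm_apply_eq, key, inv_mul_cancel, map_one]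
      rfl
    simp only [Phi, ih, LinearMap.coe_comp, Function.comp_apply,
      LinearEquiv.coe_coe, hsymm]
    rw [← hσ]
    congr 1
    rw [key, mul_inv_cancel, map_one]
    rfl
end

section
/- Let ρ: G → U(H) be a unitary representation, Π the orthogonal projection onto a linear subspace T with ρ(g)T ⊆ T for all g, and let ∇R^g be a random vector field on H satisfying ∇R^g(ρ(h)A) ∼ ρ(h)∇R^g(A) for all h ∈ G, A ∈ H (equivariance in distribution), with independent fresh draws at each step. Define the SGD iteration A^{t+1} = A^t − γ_t Π ∇R^g(A^t) with step sizes γ_t. If ρ(h)A^0 ∼ A^0 for all h ∈ G and A^0 is independent of the random fields, then ρ(h)A^t ∼ A^t for all h ∈ G and all t ≥ 0. -/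
open MeasureTheory

lemma proj_comm {H : Type*} [NormedAddCommGroup H] [InnerProductSpace ℝ H]
    [FiniteDimensional ℝ H] {G : Type*} [Group G]
    (ρ : G →* (H ≃ₗᵢ[ℝ] H)) (T : Submodule ℝ H)
    (hT : ∀ g : G, ∀ v ∈ T, ρ g v ∈ T) (h : G) (x : H) :
    (T.orthogonalProjectionOnto (ρ h x) : H) = ρ h (T.orthogonalProjectionOnto x) := by
  apply Submodule.eq_starProjection_of_mem_of_inner_eq_zero
  · exact hT h _ (T.orthogonalProjectionOnto x).2
  · intro w hw
    have : (ρ h x : H) - ρ h (T.orthogonalProjectionOnto x) = ρ h (x - T.orthogonalProjectionOnto x) := by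
      simp [map_sub]
    rw [this]
    have h2 : w = ρ h ((ρ h⁻¹) w) := by
      simp [← LinearIsometryEquiv.coe_trans, ← map_mul]
    rw [h2, (ρ h).inner_map_map]
    exact Submodule.starProjection_inner_eq_zero x _ (hT h⁻¹ w hw)

/-- For the projected SGD iteration
`A^{t+1} = A^t − γ_t Π ∇R^g(A^t)` driven by i.i.d.-in-time random vector fields
`V (ξ t ·)` that are `G`-equivariant in distribution, with `Π` the orthogonal projection
onto a `G`-invariant subspace `T` and a `G`-invariantly distributed `A^0` independent of
the fields, the distribution of `A^t` remains `G`-invariant for all `t`. -/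
theorem stmt11 {G Ω Θ : Type*} [Group G] [MeasurableSpace Ω] [MeasurableSpace Θ]
    (P : Measure Ω) [IsProbabilityMeasure P]
    {H : Type*} [NormedAddCommGroup H] [InnerProductSpace ℝ H] [FiniteDimensional ℝ H]
    [MeasurableSpace H] [BorelSpace H]
    (ρ : G →* (H ≃ₗᵢ[ℝ] H)) (T : Submodule ℝ H)
    (hT : ∀ g : G, ∀ v ∈ T, ρ g v ∈ T)
    (V : Θ → H → H) (hV : Measurable (Function.uncurry V))
    (ξ : ℕ → Ω → Θ) (hξ : ∀ t, Measurable (ξ t))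
    (γ : ℕ → ℝ)
    (A : ℕ → Ω → H) (hA : ∀ t, Measurable (A t))
    (hrec : ∀ (t : ℕ) (ω : Ω),
      A (t + 1) ω = A t ω - γ t • ((T.orthogonalProjectionOnto (V (ξ t ω) (A t ω)) : H)))
    (hindep : ∀ t, ProbabilityTheory.IndepFun (A t) (ξ t) P)
    (hequiv : ∀ (t : ℕ) (h : G) (B : H),
      P.map (fun ω => V (ξ t ω) (ρ h B)) = P.map (fun ω => ρ h (V (ξ t ω) B)))
    (hA0 : ∀ h : G, P.map (fun ω => ρ h (A 0 ω)) = P.map (A 0)) :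
    ∀ (h : G) (t : ℕ), P.map (fun ω => ρ h (A t ω)) = P.map (A t) := by
  intro h t
  induction t with
  | zero => exact hA0 h
  | succ t ih =>
    set μ := P.map (A t) with hμ
    set ν := P.map (ξ t) with hν
    haveI : IsProbabilityMeasure μ := Measure.isProbabilityMeasure_map (hA t).aemeasurable
    haveI : IsProbabilityMeasure ν := Measure.isProbabilityMeasure_map (hξ t).aemeasurable
    have hρm : ∀ g : G, Measurable (fun x : H => (ρ g : H → H) x) :=
      fun g => (ρ g).continuous.measurable
    -- measurability of the swapped V
    have hVswap : Measurable (fun p : H × Θ => V p.2 p.1) :=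
      hV.comp measurable_swap
    have hPi : Measurable (fun v : H => (T.orthogonalProjectionOnto v : H)) :=
      (continuous_subtype_val.comp T.orthogonalProjectionOnto.continuous).measurable
    -- joint law
    have hjoint : P.map (fun ω => (A t ω, ξ t ω)) = μ.prod ν :=
      (ProbabilityTheory.indepFun_iff_map_prod_eq_prod_map_map
        (hA t).aemeasurable (hξ t).aemeasurable).1 (hindep t)
    -- the update map
    set F : H × Θ → H := fun p => p.1 - γ t • (T.orthogonalProjectionOnto (V p.2 p.1) : H) with hF
    have hFm : Measurable F := measurable_fst.sub ((hPi.comp hVswap).const_smul (γ t))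
    have hAt1 : A (t + 1) = F ∘ (fun ω => (A t ω, ξ t ω)) := by
      funext ω; exact hrec t ω
    have hpairm : Measurable (fun ω => (A t ω, ξ t ω)) := (hA t).prodMk (hξ t)
    have hmap1 : P.map (A (t + 1)) = (μ.prod ν).map F := by
      rw [hAt1, ← Measure.map_map hFm hpairm, hjoint]
    have hmap2 : P.map (fun ω => ρ h (A (t + 1) ω)) = (μ.prod ν).map ((ρ h : H → H) ∘ F) := by
      have : (fun ω => ρ h (A (t + 1) ω)) = ((ρ h : H → H) ∘ F) ∘ (fun ω => (A t ω, ξ t ω)) := by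
        funext ω; simp [hAt1]
      rw [this, ← Measure.map_map ((hρm h).comp hFm) hpairm, hjoint]
    -- rewrite ρ h ∘ F using commutation
    have hcomm : (ρ h : H → H) ∘ F =
        fun p : H × Θ => ρ h p.1 - γ t • (T.orthogonalProjectionOnto (ρ h (V p.2 p.1)) : H) := by
      funext p
      simp only [Function.comp, hF, map_sub, LinearIsometryEquiv.map_smul,
        proj_comm ρ T hT h]
    -- use IH: μ.map (ρ h) = μ
    have hμinv : μ.map (fun x => (ρ h : H → H) x) = μ := by
      rw [hμ, Measure.map_map (hρm h) (hA t)]; exact ih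
    -- F pushforward equals G₁ pushforward
    have step1 : (μ.prod ν).map F =
        (μ.prod ν).map (fun p : H × Θ => ρ h p.1 - γ t •
          (T.orthogonalProjectionOnto (V p.2 (ρ h p.1)) : H)) := by
      conv_lhs => rw [← hμinv, ← Measure.map_id (μ := ν),
        Measure.map_prod_map _ _ (hρm h) measurable_id,
        Measure.map_map hFm ((hρm h).prodMap measurable_id)]
      rfl
    -- fiberwise equality via hequiv
    have hequiv' : ∀ B : H, ν.map (fun θ => V θ (ρ h B)) = ν.map (fun θ => ρ h (V θ B)) := by
      intro B
      have m1 : Measurable (fun θ => V θ (ρ h B)) := hV.comp (measurable_id.prodMk measurable_const)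
      have m2 : Measurable (fun θ : Θ => ρ h (V θ B)) :=
        (hρm h).comp (hV.comp (measurable_id.prodMk measurable_const))
      rw [hν, Measure.map_map m1 (hξ t), Measure.map_map m2 (hξ t)]
      exact hequiv t h B
    have step2 : (μ.prod ν).map (fun p : H × Θ => ρ h p.1 - γ t •
          (T.orthogonalProjectionOnto (V p.2 (ρ h p.1)) : H)) =
        (μ.prod ν).map (fun p : H × Θ => ρ h p.1 - γ t •
          (T.orthogonalProjectionOnto (ρ h (V p.2 p.1)) : H)) := by
      have mG1 : Measurable (fun p : H × Θ => ρ h p.1 - γ t •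
          (T.orthogonalProjectionOnto (V p.2 (ρ h p.1)) : H)) :=
        ((hρm h).comp measurable_fst).sub
          (((hPi.comp (hVswap.comp (((hρm h).comp measurable_fst).prodMk measurable_snd)))).const_smul (γ t))
      have mG2 : Measurable (fun p : H × Θ => ρ h p.1 - γ t •
          (T.orthogonalProjectionOnto (ρ h (V p.2 p.1)) : H)) :=
        ((hρm h).comp measurable_fst).sub
          ((hPi.comp ((hρm h).comp hVswap)).const_smul (γ t))
      ext s hs
      rw [Measure.map_apply mG1 hs, Measure.map_apply mG2 hs,
        Measure.prod_apply (mG1 hs), Measure.prod_apply (mG2 hs)]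
      refine lintegral_congr fun a => ?_
      have hs' : MeasurableSet {v : H | ρ h a - γ t • (T.orthogonalProjectionOnto v : H) ∈ s} := by
        exact (measurable_const.sub (hPi.const_smul (γ t))) hs
      have m1 : Measurable (fun θ => V θ (ρ h a)) := hV.comp (measurable_id.prodMk measurable_const)
      have m2 : Measurable (fun θ => ρ h (V θ a)) :=
        (hρm h).comp (hV.comp (measurable_id.prodMk measurable_const))
      have e1 : Prod.mk a ⁻¹' ((fun p : H × Θ => ρ h p.1 - γ t •
          (T.orthogonalProjectionOnto (V p.2 (ρ h p.1)) : H)) ⁻¹' s) =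
          (fun θ => V θ (ρ h a)) ⁻¹' {v : H | ρ h a - γ t • (T.orthogonalProjectionOnto v : H) ∈ s} := rfl
      have e2 : Prod.mk a ⁻¹' ((fun p : H × Θ => ρ h p.1 - γ t •
          (T.orthogonalProjectionOnto (ρ h (V p.2 p.1)) : H)) ⁻¹' s) =
          (fun θ => ρ h (V θ a)) ⁻¹' {v : H | ρ h a - γ t • (T.orthogonalProjectionOnto v : H) ∈ s} := rfl
      rw [e1, e2, ← Measure.map_apply m1 hs', ← Measure.map_apply m2 hs', hequiv' a]
    rw [hmap1, hmap2, hcomm, step1, step2]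
end

section
/- Let G be a compact group with Haar probability measure μ, ρ a unitary representation of G on H, and for data (x,y) define the augmented risk R_aug(A) = ∫_G E_D[ℓ(Φ_A(ρ_0(g)x), ρ_N(g)y)] dμ(g), where ℓ is G-invariant (ℓ(ρ_N(g)y, ρ_N(g)y') = ℓ(y,y')) and the nonlinearities of Φ are G-equivariant. Then R_aug(A) = ∫_G R(ρ(g)A) dμ(g), where R(A) = E_D[ℓ(Φ_A(x), y)]. -/
open MeasureTheory

lemma Phi_rho {G : Type*} [Group G]
    {X : ℕ → Type*} [∀ i, AddCommGroup (X i)] [∀ i, Module ℝ (X i)]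
    (ρ : ∀ i : ℕ, G →* (X i ≃ₗ[ℝ] X i))
    (σ : ∀ i : ℕ, X (i + 1) → X (i + 1))
    (hσ : ∀ (i : ℕ) (g : G) (y : X (i + 1)), σ i (ρ (i + 1) g y) = ρ (i + 1) g (σ i y))
    (A : ∀ i : ℕ, X i →ₗ[ℝ] X (i + 1)) (g : G) :
    ∀ (n : ℕ) (x : X 0),
      Phi σ (fun i => (ρ (i + 1) g).toLinearMap ∘ₗ A i ∘ₗ (ρ i g).symm.toLinearMap) n x
        = ρ n g (Phi σ A n ((ρ 0 g).symm x))
  | 0, x => ((ρ 0 g).apply_symm_apply x).symm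
  | n + 1, x => by
    simp only [Phi, Phi_rho ρ σ hσ A g n x, LinearMap.coe_comp, Function.comp_apply,
      LinearEquiv.coe_coe, LinearEquiv.symm_apply_apply, hσ]

/-- For a compact group with Haar probability measure `μ`, a `G`-invariant
loss `ℓ` and a network with `G`-equivariant nonlinearities,
`R_aug(A) = ∫_G E_D[ℓ(Φ_A(ρ_0(g)x), ρ_N(g)y)] dμ(g) = ∫_G R(ρ(g)A) dμ(g)` where
`R(A) = E_D[ℓ(Φ_A(x), y)]` and `ρ` is the lifted representation on parameters. -/
theorem stmt12 {G : Type*} [Group G] [TopologicalSpace G] [IsTopologicalGroup G]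
    [CompactSpace G] [MeasurableSpace G] [BorelSpace G]
    (μ : Measure G) [IsProbabilityMeasure μ] [μ.IsHaarMeasure] [μ.IsInvInvariant]
    {X : ℕ → Type*} [∀ i, AddCommGroup (X i)] [∀ i, Module ℝ (X i)]
    [∀ i, MeasurableSpace (X i)]
    (ρ : ∀ i : ℕ, G →* (X i ≃ₗ[ℝ] X i))
    (σ : ∀ i : ℕ, X (i + 1) → X (i + 1))
    (hσ : ∀ (i : ℕ) (g : G) (y : X (i + 1)), σ i (ρ (i + 1) g y) = ρ (i + 1) g (σ i y))
    (N : ℕ)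
    (D : Measure (X 0 × X N)) [IsProbabilityMeasure D]
    (ℓ : X N → X N → ℝ)
    (hℓ : ∀ (g : G) (y y' : X N), ℓ (ρ N g y) (ρ N g y') = ℓ y y')
    (A : ∀ i : ℕ, X i →ₗ[ℝ] X (i + 1)) :
    ∫ g, (∫ q, ℓ (Phi σ A N (ρ 0 g q.1)) (ρ N g q.2) ∂D) ∂μ
      = ∫ g, (∫ q, ℓ (Phi σ
            (fun i => (ρ (i + 1) g).toLinearMap ∘ₗ A i ∘ₗ (ρ i g).symm.toLinearMap)
            N q.1) q.2 ∂D) ∂μ := by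
  rw [← MeasureTheory.integral_inv_eq_self
    (fun g => ∫ q, ℓ (Phi σ A N (ρ 0 g q.1)) (ρ N g q.2) ∂D) μ]
  refine integral_congr_ae (Filter.Eventually.of_forall fun g => ?_)
  refine integral_congr_ae (Filter.Eventually.of_forall fun q => ?_)
  have h1 : (ρ 0 g⁻¹) = (ρ 0 g).symm := by
    rw [map_inv]; rfl
  have h2 : (ρ N g⁻¹) = (ρ N g).symm := by
    rw [map_inv]; rfl
  dsimp only
  rw [Phi_rho ρ σ hσ A g N q.1, h1, h2, ← hℓ g]
  simp
end
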